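/- Let f be a C¹ expanding circle map with fixed point p, let n ≥ 1 satisfy |(fⁿ)'(x)| > 1 for all x, and set h(x) = Σ_{k=0}^{n−1} |(fᵏ)'(x)|. Let H be the orientation-preserving C¹ diffeomorphism of T¹ with H(p) = 0 and H'(x) = ((|d|−1)/(|d|ⁿ−1)) h(x), where d is the degree of f. Then the conjugate g = H ∘ f ∘ H⁻¹ satisfies |g'(x)| > 1 for all x ∈ T¹ and g(0) = 0. -/

import Mathlib

open MeasureTheory Set Finset

/-- **Normalizing conjugation.**
Let `F` be a lift of a `C¹` expanding circle map `f` of degree `d` (`|d| ≥ 2`), with a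
fixed point `p` (lift chosen so that `F p = p`), and let `n ≥ 1` satisfy
`|(fⁿ)'(x)| > 1` for all `x`.  Set `h(x) = Σ_{k<n} |(fᵏ)'(x)|`, and let `H` be (the lift
of) the orientation-preserving `C¹` circle diffeomorphism with `H p = 0` and
`H' = ((|d|−1)/(|d|ⁿ−1)) h`, with inverse `H⁻¹`.  Then the conjugate
`g = H ∘ f ∘ H⁻¹` satisfies `|g'(x)| > 1` everywhere and `g 0 = 0`. -/
theorem conjugate_is_uniformly_expanding
    (F : ℝ → ℝ) (d : ℤ) (hd : 2 ≤ d.natAbs)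
    (hliftF : ∀ x : ℝ, F (x + 1) = F x + d)
    (hC1 : ContDiff ℝ 1 F)
    (hexp : ∃ c : ℝ, 0 < c ∧ ∃ lam : ℝ, 1 < lam ∧
      ∀ (n : ℕ) (x : ℝ), c * lam ^ n < |deriv (F^[n]) x|)
    (p : ℝ) (hp : F p = p)
    (n : ℕ) (hn : 1 ≤ n) (hn' : ∀ x : ℝ, 1 < |deriv (F^[n]) x|)
    (H Hinv : ℝ → ℝ)
    (hH0 : H p = 0)
    (hHlift : ∀ x : ℝ, H (x + 1) = H x + 1)
    (hH' : ∀ x : ℝ, HasDerivAt H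
      ((((d.natAbs : ℝ) - 1) / ((d.natAbs : ℝ) ^ n - 1)) *
        ∑ k ∈ Finset.range n, |deriv (F^[k]) x|) x)
    (hHmono : StrictMono H)
    (hinv₁ : Function.LeftInverse Hinv H) (hinv₂ : Function.RightInverse Hinv H) :
    (∀ x : ℝ, 1 < |deriv (H ∘ F ∘ Hinv) x|) ∧ (H ∘ F ∘ Hinv) 0 = 0 := by
  classical
  set c : ℝ := ((d.natAbs : ℝ) - 1) / ((d.natAbs : ℝ) ^ n - 1) with hc
  set h : ℝ → ℝ := fun x => ∑ k ∈ Finset.range n, |deriv (F^[k]) x| with hhdef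
  have hd2 : (2 : ℝ) ≤ (d.natAbs : ℝ) := by exact_mod_cast hd
  have hcpos : 0 < c := by
    apply div_pos (by linarith)
    have : (1 : ℝ) < (d.natAbs : ℝ) ^ n :=
      one_lt_pow₀ (by linarith) (by omega)
    linarith
  have hFdiff : Differentiable ℝ F := hC1.differentiable one_ne_zero
  have hIter : ∀ k, Differentiable ℝ (F^[k]) := fun k => hFdiff.iterate k
  have hhge1 : ∀ y, 1 ≤ h y := by
    intro y
    have := Finset.single_le_sum (f := fun k => |deriv (F^[k]) y|)
      (fun i _ => abs_nonneg _) (Finset.mem_range.mpr (show 0 < n by omega))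
    simpa using this
  have hhpos : ∀ y, 0 < h y := fun y => lt_of_lt_of_le one_pos (hhge1 y)
  -- chain rule identity
  have hchain : ∀ (k : ℕ) (y : ℝ),
      deriv (F^[k + 1]) y = deriv (F^[k]) (F y) * deriv F y := by
    intro k y
    rw [Function.iterate_succ]
    exact deriv_comp y ((hIter k).differentiableAt) hFdiff.differentiableAt
  have hkey : ∀ y : ℝ, h (F y) * |deriv F y| = h y - 1 + |deriv (F^[n]) y| := by
    intro y
    have : h (F y) * |deriv F y| = ∑ k ∈ Finset.range n, |deriv (F^[k+1]) y| := by
      rw [Finset.sum_mul]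
      refine Finset.sum_congr rfl fun k _ => ?_
      rw [hchain k y, abs_mul]
    rw [this]
    have h1 : ∑ k ∈ Finset.range (n+1), |deriv (F^[k]) y|
        = (∑ k ∈ Finset.range n, |deriv (F^[k+1]) y|) + |deriv (F^[0]) y| :=
      Finset.sum_range_succ' _ n
    have h2 : ∑ k ∈ Finset.range (n+1), |deriv (F^[k]) y|
        = h y + |deriv (F^[n]) y| := Finset.sum_range_succ _ n
    have h0 : |deriv (F^[0]) y| = 1 := by simp
    rw [h0] at h1
    have := h1.symm.trans h2
    linarith
  -- continuity of Hinv
  have hHsurj : Function.Surjective H := hinv₂.surjective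
  have hHinvCont : Continuous Hinv := by
    let e := StrictMono.orderIsoOfSurjective H hHmono hHsurj
    have heq : Hinv = fun x => e.symm x := by
      funext x
      apply hHmono.injective
      have h1 : H (Hinv x) = x := hinv₂ x
      have h2 : H ((e.symm x : ℝ)) = x := e.apply_symm_apply x
      rw [h1, h2]
    rw [heq]
    exact (OrderIso.toHomeomorph e.symm).continuous
  constructor
  · intro x
    set y := Hinv x with hy
    have hHy : H y = x := hinv₂ x
    have hderivHinv : HasDerivAt Hinv (c * h y)⁻¹ x := by
      refine HasDerivAt.of_local_left_inverse hHinvCont.continuousAt (hH' y)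
        (ne_of_gt (mul_pos hcpos (hhpos y))) ?_
      exact Filter.Eventually.of_forall hinv₂
    have hF' : HasDerivAt F (deriv F y) y := (hFdiff y).hasDerivAt
    have hinner : HasDerivAt (F ∘ Hinv) (deriv F y * (c * h y)⁻¹) x :=
      hF'.comp x hderivHinv
    have houter : HasDerivAt (H ∘ F ∘ Hinv)
        (c * h (F y) * (deriv F y * (c * h y)⁻¹)) x :=
      (hH' (F y)).comp x hinner
    rw [houter.deriv]
    have hA : 1 < |deriv (F^[n]) y| := hn' y
    have habs : |c * h (F y) * (deriv F y * (c * h y)⁻¹)|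
        = c * (h (F y) * |deriv F y|) * (c * h y)⁻¹ := by
      rw [abs_mul, abs_mul, abs_mul, abs_inv]
      rw [abs_of_pos hcpos, abs_of_pos (hhpos (F y)), abs_of_pos (mul_pos hcpos (hhpos y))]
      ring
    rw [habs, hkey y]
    rw [show c * (h y - 1 + |deriv (F^[n]) y|) * (c * h y)⁻¹
        = (c * (h y - 1 + |deriv (F^[n]) y|)) / (c * h y) by ring]
    rw [lt_div_iff₀ (mul_pos hcpos (hhpos y))]
    nlinarith [hhpos y, hcpos]
  · have hp0 : Hinv 0 = p := by rw [← hH0]; exact hinv₁ p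
    simp only [Function.comp_apply, hp0, hp, hH0]
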